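/- Let r ≥ 2, let G be a graph with no K_r minor, let X ⊆ V(G), and let C_1, …, C_ℓ be pairwise vertex-disjoint connected subsets of V(G) \ X such that each C_i has at least r neighbors in X. Then ℓ + |E(G[X])| ≤ e(|X|, r), where e(n, r) denotes the maximum number of edges of an n-vertex graph with no K_r minor. In particular, ℓ ≤ e(|X|, r). -/

import Mathlib

open SimpleGraph

/-- `H` is a minor of `G`: there is a family of nonempty, pairwise disjoint, connected
branch sets in `G`, one for each vertex of `H`, such that branch sets of adjacent
vertices of `H` are joined by an edge of `G`. -/
def MinorOf {W V : Type*} (H : SimpleGraph W) (G : SimpleGraph V) : Prop :=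
  ∃ B : W → Set V,
    (∀ w, (G.induce (B w)).Connected) ∧
    (Pairwise fun w w' => Disjoint (B w) (B w')) ∧
    (∀ u v : W, H.Adj u v → ∃ x ∈ B u, ∃ y ∈ B v, G.Adj x y)

section Aux

variable {V W : Type*} {G : SimpleGraph V} {H : SimpleGraph W}

lemma aux_walk_union_connected (B : W → Set V)
    (hBconn : ∀ w, (G.induce (B w)).Connected)
    (hedge : ∀ u v : W, H.Adj u v → ∃ x ∈ B u, ∃ y ∈ B v, G.Adj x y)
    {a b : W} (p : H.Walk a b) :
    (G.induce (⋃ x ∈ p.support, B x)).Connected := by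
  induction p with
  | @nil u =>
    have hset : (⋃ x ∈ (SimpleGraph.Walk.nil : H.Walk u u).support, B x) = B u := by simp
    rw [hset]; exact hBconn u
  | @cons u v w h p ih =>
    have hset : (⋃ x ∈ (SimpleGraph.Walk.cons h p).support, B x)
        = B u ∪ ⋃ x ∈ p.support, B x := by
      simp [SimpleGraph.Walk.support_cons]
    rw [hset]
    obtain ⟨x, hx, y, hy, hxy⟩ := hedge u v h
    exact connected_induce_union (hBconn u).preconnected ih.preconnected hx
      (Set.mem_biUnion p.start_mem_support hy) hxy

lemma aux_iUnion_connected (B : W → Set V)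
    (hBconn : ∀ w, (G.induce (B w)).Connected)
    (hedge : ∀ u v : W, H.Adj u v → ∃ x ∈ B u, ∃ y ∈ B v, G.Adj x y)
    {s : Set W} (hs : (H.induce s).Connected) :
    (G.induce (⋃ x ∈ s, B x)).Connected := by
  obtain ⟨w₀⟩ := hs.nonempty
  obtain ⟨u⟩ := (hBconn w₀).nonempty
  apply G.induce_connected_of_patches (u : V) (Set.mem_biUnion w₀.2 u.2)
  intro v hv
  obtain ⟨w, hw, hvw⟩ := Set.mem_iUnion₂.1 hv
  obtain ⟨q⟩ := hs.preconnected w₀ ⟨w, hw⟩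
  let p : H.Walk (w₀ : W) w := q.map (SimpleGraph.Embedding.induce s).toHom
  have hsupp : ∀ x ∈ p.support, x ∈ s := by
    intro x hx
    have := SimpleGraph.Walk.support_map (SimpleGraph.Embedding.induce s).toHom (p := q)
    replace hx : x ∈ (q.map (SimpleGraph.Embedding.induce s).toHom).support := hx
    rw [this] at hx
    obtain ⟨y, _, rfl⟩ := List.mem_map.1 hx
    exact y.2
  refine ⟨⋃ x ∈ p.support, B x, ?_, ?_, ?_, ?_⟩
  · intro z hz
    obtain ⟨x, hx, hz⟩ := Set.mem_iUnion₂.1 hz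
    exact Set.mem_biUnion (hsupp x hx) hz
  · exact Set.mem_biUnion p.start_mem_support u.2
  · exact Set.mem_biUnion p.end_mem_support hvw
  · exact (aux_walk_union_connected B hBconn hedge p).preconnected _ _

lemma MinorOf.trans {U : Type*} {K : SimpleGraph U}
    (h1 : MinorOf K H) (h2 : MinorOf H G) : MinorOf K G := by
  obtain ⟨A, Aconn, Adisj, Aedge⟩ := h1
  obtain ⟨B, Bconn, Bdisj, Bedge⟩ := h2
  refine ⟨fun u => ⋃ x ∈ A u, B x, ?_, ?_, ?_⟩
  · intro u
    exact aux_iUnion_connected B Bconn Bedge (Aconn u)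
  · intro u u' huu'
    rw [Set.disjoint_left]
    intro z hz hz'
    obtain ⟨x, hx, hzx⟩ := Set.mem_iUnion₂.1 hz
    obtain ⟨y, hy, hzy⟩ := Set.mem_iUnion₂.1 hz'
    rcases eq_or_ne x y with rfl | hxy
    · exact (Adisj huu').ne_of_mem hx hy rfl
    · exact (Bdisj hxy).ne_of_mem hzx hzy rfl
  · intro u v huv
    obtain ⟨x, hx, y, hy, hxy⟩ := Aedge u v huv
    obtain ⟨a, ha, b, hb, hab⟩ := Bedge x y hxy
    exact ⟨a, Set.mem_biUnion hx ha, b, Set.mem_biUnion hy hb, hab⟩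

lemma MinorOf.of_iso {U V' : Type*} {K : SimpleGraph U} {G' : SimpleGraph V'}
    (e : G ≃g G') (h : MinorOf K G) : MinorOf K G' := by
  obtain ⟨B, Bconn, Bdisj, Bedge⟩ := h
  refine ⟨fun u => e '' B u, ?_, ?_, ?_⟩
  · intro u
    let hom : G.induce (B u) →g G'.induce (e '' B u) :=
      { toFun := fun x => ⟨e x, Set.mem_image_of_mem e x.2⟩,
        map_rel' := by
          rintro ⟨x, hx⟩ ⟨y, hy⟩ hadj
          simpa using e.map_adj_iff.2 (by simpa using hadj) }
    apply (Bconn u).map hom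
    rintro ⟨y, hy⟩
    obtain ⟨x, hx, rfl⟩ := hy
    exact ⟨⟨x, hx⟩, rfl⟩
  · intro u v huv
    exact Set.disjoint_image_of_injective (RelIso.injective e) (Bdisj huv)
  · intro u v huv
    obtain ⟨x, hx, y, hy, hxy⟩ := Bedge u v huv
    exact ⟨e x, Set.mem_image_of_mem e hx, e y, Set.mem_image_of_mem e hy,
      e.map_adj_iff.2 hxy⟩

end Aux

lemma aux_induce_singleton_connected {V : Type*} (G : SimpleGraph V) (v : V) :
    (G.induce {v}).Connected := by
  rw [SimpleGraph.connected_iff]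
  refine ⟨?_, ⟨⟨v, rfl⟩⟩⟩
  rintro ⟨a, ha⟩ ⟨b, hb⟩
  have hab : a = b := by
    rw [Set.mem_singleton_iff] at ha hb
    rw [ha, hb]
  subst hab
  have : (⟨a, ha⟩ : ({v} : Set V)) = ⟨a, hb⟩ := rfl
  rw [this]

lemma aux_key {V : Type*} (G : SimpleGraph V) (r : ℕ)
    (hG : ¬ MinorOf (⊤ : SimpleGraph (Fin r)) G)
    (X : Finset V) (E : ℕ)
    (hE : ∀ G' : SimpleGraph (Fin X.card), ¬ MinorOf (⊤ : SimpleGraph (Fin r)) G' →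
      G'.edgeSet.ncard ≤ E) :
    ∀ (ℓ : ℕ) (C : Fin ℓ → Set V),
      (Pairwise fun i j => Disjoint (C i) (C j)) →
      (∀ i, Disjoint (C i) (X : Set V)) →
      (∀ i, (G.induce (C i)).Connected) →
      (∀ i, r ≤ ((X : Set V) ∩ {x | ∃ c ∈ C i, G.Adj c x}).ncard) →
      ∀ (H : SimpleGraph ↥(X : Set V)) (B : ↥(X : Set V) → Set V),
        (∀ x, (G.induce (B x)).Connected) →
        (Pairwise fun x y => Disjoint (B x) (B y)) →
        (∀ x y, H.Adj x y → ∃ a ∈ B x, ∃ b ∈ B y, G.Adj a b) →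
        (∀ x : ↥(X : Set V), (x : V) ∈ B x) →
        (∀ i x, Disjoint (C i) (B x)) →
        ℓ + H.edgeSet.ncard ≤ E := by
  classical
  haveI : Fintype (X : Set V) := X.finite_toSet.fintype
  intro ℓ
  induction ℓ with
  | zero =>
    intro C _ _ _ _ H B Bconn Bdisj Bedge BX BC
    have hHG : MinorOf H G := ⟨B, Bconn, Bdisj, Bedge⟩
    have noK : ¬ MinorOf (⊤ : SimpleGraph (Fin r)) H := fun h => hG (h.trans hHG)
    have hcard : Fintype.card (X : Set V) = X.card := by
      rw [← Nat.card_eq_fintype_card, Nat.card_coe_set_eq, Set.ncard_coe_finset]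
    set G' := H.overFin hcard with hG'
    have iso : H ≃g G' := H.overFinIso hcard
    have hnoK' : ¬ MinorOf (⊤ : SimpleGraph (Fin r)) G' := fun h =>
      noK (h.of_iso iso.symm)
    have hle := hE G' hnoK'
    have hcount : H.edgeSet.ncard = G'.edgeSet.ncard := by
      rw [← Nat.card_coe_set_eq, ← Nat.card_coe_set_eq]
      exact Nat.card_congr iso.mapEdgeSet
    omega
  | succ ℓ ih =>
    intro C Cdisj CX Cconn Cnbr H B Bconn Bdisj Bedge BX BC
    -- neighbours of C 0 inside X, as a set of the subtype
    set N : Set ↥(X : Set V) := {x | ∃ c ∈ C 0, G.Adj c (x : V)} with hN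
    have hNcard : r ≤ N.ncard := by
      have himg : (X : Set V) ∩ {x | ∃ c ∈ C 0, G.Adj c x} = Subtype.val '' N := by
        ext x
        constructor
        · rintro ⟨hxX, hx⟩
          exact ⟨⟨x, hxX⟩, hx, rfl⟩
        · rintro ⟨⟨y, hy⟩, hmem, rfl⟩
          exact ⟨hy, hmem⟩
      have := Cnbr 0
      rwa [himg, Set.ncard_image_of_injective _ Subtype.val_injective] at this
    -- find two nonadjacent neighbours
    have hpair : ∃ a ∈ N, ∃ b ∈ N, a ≠ b ∧ ¬ H.Adj a b := by
      by_contra hcon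
      push_neg at hcon
      obtain ⟨t, htN, htcard⟩ := Set.exists_subset_card_eq hNcard
      haveI : Fintype t := Set.Finite.fintype (Set.toFinite t)
      have htc : Fintype.card t = r := by
        rw [← Nat.card_eq_fintype_card, Nat.card_coe_set_eq, htcard]
      have f := Fintype.equivFinOfCardEq htc
      apply hG
      refine ⟨fun w => B ((f.symm w) : ↥(X : Set V)), ?_, ?_, ?_⟩
      · intro w; exact Bconn _
      · intro w w' hww'
        apply Bdisj
        intro hEq
        exact hww' (f.symm.injective (Subtype.val_injective (by exact_mod_cast hEq)))
      · intro u v huv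
        have hne : ((f.symm u : t) : ↥(X : Set V)) ≠ ((f.symm v : t) : ↥(X : Set V)) := by
          intro hEq
          exact ((SimpleGraph.top_adj _ _).1 huv)
            (f.symm.injective (Subtype.val_injective hEq))
        exact Bedge _ _ (hcon _ (htN (f.symm u).2) _ (htN (f.symm v).2) hne)
    obtain ⟨a, haN, b, hbN, hab, hnadj⟩ := hpair
    obtain ⟨ca, hca, hcaa⟩ := haN
    obtain ⟨cb, hcb, hcbb⟩ := hbN
    -- new graph and branch sets
    set H' : SimpleGraph ↥(X : Set V) := H ⊔ SimpleGraph.edge a b with hH'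
    set B' : ↥(X : Set V) → Set V := Function.update B a (B a ∪ C 0) with hB'
    have hB'a : B' a = B a ∪ C 0 := Function.update_self a _ B
    have hB'ne : ∀ x, x ≠ a → B' x = B x := fun x hx => Function.update_of_ne hx _ B
    have hBsub : ∀ x, B x ⊆ B' x := by
      intro x
      rcases eq_or_ne x a with rfl | hx
      · rw [hB'a]; exact Set.subset_union_left
      · rw [hB'ne x hx]
    have hkey := ih (fun i => C i.succ)
      (fun i j hij => Cdisj (fun h => hij (Fin.succ_injective _ h)))
      (fun i => CX i.succ) (fun i => Cconn i.succ) (fun i => Cnbr i.succ)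
      H' B'
      (by
        intro x
        rcases eq_or_ne x a with rfl | hx
        · rw [hB'a]
          exact connected_induce_union (Bconn x).preconnected (Cconn 0).preconnected (BX x) hca hcaa.symm
        · rw [hB'ne x hx]; exact Bconn x)
      (by
        intro x y hxy
        rcases eq_or_ne x a with rfl | hx
        · rw [hB'a, hB'ne y hxy.symm]
          exact Set.disjoint_union_left.2 ⟨Bdisj hxy, BC 0 y⟩
        · rcases eq_or_ne y a with rfl | hy
          · rw [hB'a, hB'ne x hx]
            exact Set.disjoint_union_right.2 ⟨Bdisj hxy, (BC 0 x).symm⟩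
          · rw [hB'ne x hx, hB'ne y hy]; exact Bdisj hxy)
      (by
        intro x y hxy
        rcases (SimpleGraph.sup_adj _ _ _ _).1 hxy with h | h
        · obtain ⟨p, hp, q, hq, hpq⟩ := Bedge x y h
          exact ⟨p, hBsub x hp, q, hBsub y hq, hpq⟩
        · obtain ⟨hc, -⟩ := (SimpleGraph.edge_adj a b x y).1 h
          rcases hc with ⟨hxa, hyb⟩ | ⟨hxb, hya⟩
          · rw [hxa, hyb]
            exact ⟨cb, by rw [hB'a]; exact Or.inr hcb, (b : V),
              by rw [hB'ne b hab.symm]; exact BX b, hcbb⟩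
          · rw [hxb, hya]
            exact ⟨(b : V), by rw [hB'ne b hab.symm]; exact BX b, cb,
              by rw [hB'a]; exact Or.inr hcb, hcbb.symm⟩)
      (by
        intro x
        rcases eq_or_ne x a with rfl | hx
        · rw [hB'a]; exact Or.inl (BX x)
        · rw [hB'ne x hx]; exact BX x)
      (by
        intro i x
        rcases eq_or_ne x a with rfl | hx
        · rw [hB'a]
          exact Set.disjoint_union_right.2
            ⟨BC i.succ x, Cdisj (by exact (Fin.succ_ne_zero i))⟩
        · rw [hB'ne x hx]; exact BC i.succ x)
    -- counting edges
    have hedgeSet : H'.edgeSet = insert s(a, b) H.edgeSet := by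
      rw [hH', SimpleGraph.edgeSet_sup]
      have he : (SimpleGraph.edge a b).edgeSet = {s(a, b)} := by
        rw [SimpleGraph.edge, SimpleGraph.edgeSet_fromEdgeSet]
        ext e
        simp only [Set.mem_diff, Set.mem_singleton_iff, Set.mem_setOf_eq]
        constructor
        · rintro ⟨he, -⟩; exact he
        · rintro rfl
          exact ⟨rfl, fun hd => hab (Sym2.mk_isDiag_iff.1 hd)⟩
      rw [he, Set.union_singleton]
    have hmem : s(a, b) ∉ H.edgeSet := fun h => hnadj ((SimpleGraph.mem_edgeSet H).1 h)
    have hcount : H'.edgeSet.ncard = H.edgeSet.ncard + 1 := by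
      rw [hedgeSet]
      exact Set.ncard_insert_of_notMem hmem (Set.toFinite _)
    omega

/-- Let `r ≥ 2`, let `G` have no `K_r` minor, and let `C_1, …, C_ℓ` be pairwise disjoint
connected subsets of `V(G) \ X`, each with at least `r` neighbors in `X`.  If `E` bounds
the number of edges of every `K_r`-minor-free graph on `|X|` vertices, then
`ℓ + |E(G[X])| ≤ E`; in particular `ℓ ≤ E`. -/
theorem stmt10 {V : Type*} (G : SimpleGraph V) (r : ℕ) (hr : 2 ≤ r)
    (hG : ¬ MinorOf (⊤ : SimpleGraph (Fin r)) G)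
    (X : Finset V) (ℓ : ℕ) (C : Fin ℓ → Set V)
    (hdisj : Pairwise fun i j => Disjoint (C i) (C j))
    (hX : ∀ i, Disjoint (C i) (X : Set V))
    (hconn : ∀ i, (G.induce (C i)).Connected)
    (hnbr : ∀ i, r ≤ ((X : Set V) ∩ {x | ∃ c ∈ C i, G.Adj c x}).ncard)
    (E : ℕ)
    (hE : ∀ G' : SimpleGraph (Fin X.card), ¬ MinorOf (⊤ : SimpleGraph (Fin r)) G' →
      G'.edgeSet.ncard ≤ E) :
    ℓ + (G.induce (X : Set V)).edgeSet.ncard ≤ E := by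
  apply aux_key G r hG X E hE ℓ C hdisj hX hconn hnbr
    (G.induce (X : Set V)) (fun x => {(x : V)})
  · intro x
    exact aux_induce_singleton_connected G _
  · intro x y hxy
    rw [Set.disjoint_singleton]
    exact fun h => hxy (Subtype.val_injective h)
  · intro x y hxy
    exact ⟨(x : V), rfl, (y : V), rfl, hxy⟩
  · intro x
    exact rfl
  · intro i x
    rw [Set.disjoint_singleton_right]
    exact fun h => (hX i).ne_of_mem h x.2 rfl
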